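/- arXiv:1703.10662 — 5 statements merged into one kernel-verified Lean document; each statement's English description precedes it below -/
import Mathlib

section
/- Let μ, λ, γ, T_M be real parameters with μ > γ ≥ 0, λ > 0 and T_M > 1. Define τ : [0,1] → ℝ by τ(0) = 0 and τ(s) = (s^μ / (s^μ + (1-s)^λ)) · (T_M + (1-s)^λ / s^γ) for s ∈ (0,1]. Then τ is monotone increasing on [0,1], and τ(1) = T_M. -/
private lemma tau_key (TM u1 u2 w1 w2 : ℝ) (hTM : 1 < TM) (hu2 : 0 ≤ u2) (hu : u2 ≤ u1)
    (hw2 : 1 ≤ w2) (hw : w2 ≤ w1) :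
    (TM + u1) / (1 + u1 * w1) ≤ (TM + u2) / (1 + u2 * w2) := by
  have hu1 : 0 ≤ u1 := le_trans hu2 hu
  have h1 : 0 < 1 + u1 * w1 := by nlinarith
  have h2 : 0 < 1 + u2 * w2 := by nlinarith
  rw [div_le_div_iff₀ h1 h2]
  nlinarith [mul_nonneg (sub_nonneg.2 hu) (show (0:ℝ) ≤ TM * w1 - 1 by nlinarith),
    mul_nonneg hu2 (sub_nonneg.2 hw), mul_nonneg (mul_nonneg hu1 hu2) (sub_nonneg.2 hw)]

/-- Hypothesis (H2): the relaxation parameter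
`τ(s) = s^μ/(s^μ + (1-s)^λ) · (T_M + (1-s)^λ/s^γ)` for `s ∈ (0,1]`, with `τ(0) = 0`,
where `μ > γ ≥ 0`, `λ > 0` and `T_M > 1`, is monotone increasing on `[0,1]`
and satisfies `τ(1) = T_M`. -/
theorem tau_monotoneOn_and_value_at_one
    (μ lam γ TM : ℝ) (hγ : 0 ≤ γ) (hγμ : γ < μ) (hlam : 0 < lam) (hTM : 1 < TM)
    (τ : ℝ → ℝ)
    (hτ0 : τ 0 = 0)
    (hτ : ∀ s ∈ Set.Ioc (0:ℝ) 1,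
      τ s = (s ^ μ / (s ^ μ + (1 - s) ^ lam)) * (TM + (1 - s) ^ lam / s ^ γ)) :
    MonotoneOn τ (Set.Icc 0 1) ∧ τ 1 = TM := by
  set u : ℝ → ℝ := fun s => (1 - s) ^ lam / s ^ γ with hu_def
  set w : ℝ → ℝ := fun s => s ^ (γ - μ) with hw_def
  -- reformulation on (0,1]
  have hτ' : ∀ s ∈ Set.Ioc (0:ℝ) 1, τ s = (TM + u s) / (1 + u s * w s) := by
    intro s hs
    have hs0 : 0 < s := hs.1
    have hsμ : 0 < s ^ μ := Real.rpow_pos_of_pos hs0 μ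
    have hsγ : 0 < s ^ γ := Real.rpow_pos_of_pos hs0 γ
    have hB : 0 ≤ (1 - s) ^ lam := Real.rpow_nonneg (by linarith [hs.2]) lam
    have hd : 0 < s ^ μ + (1 - s) ^ lam := by linarith
    have hsplit : s ^ (γ - μ) = s ^ γ / s ^ μ := Real.rpow_sub hs0 γ μ
    have huw : u s * w s = (1 - s) ^ lam / s ^ μ := by
      simp only [hu_def, hw_def, hsplit]
      field_simp
    rw [hτ s hs, huw]
    rw [hu_def]
    field_simp
  -- nonnegativity on (0,1]
  have hτnn : ∀ s ∈ Set.Ioc (0:ℝ) 1, 0 ≤ τ s := by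
    intro s hs
    have hs0 : 0 < s := hs.1
    have hB : 0 ≤ (1 - s) ^ lam := Real.rpow_nonneg (by linarith [hs.2]) lam
    have hsγ : 0 < s ^ γ := Real.rpow_pos_of_pos hs0 γ
    have hun : 0 ≤ u s := div_nonneg hB hsγ.le
    have hwn : 0 ≤ w s := (Real.rpow_pos_of_pos hs0 _).le
    rw [hτ' s hs]
    positivity
  -- u is antitone, w is antitone and ≥ 1 on (0,1]
  have hu_anti : ∀ a ∈ Set.Ioc (0:ℝ) 1, ∀ b ∈ Set.Ioc (0:ℝ) 1, a ≤ b → u b ≤ u a := by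
    intro a ha b hb hab
    have : (1 - b) ^ lam ≤ (1 - a) ^ lam :=
      Real.rpow_le_rpow (by linarith [hb.2]) (by linarith) hlam.le
    exact div_le_div₀ (Real.rpow_nonneg (by linarith [ha.2]) lam) this
      (Real.rpow_pos_of_pos ha.1 γ)
      (Real.rpow_le_rpow ha.1.le hab hγ)
  have hw_anti : ∀ a ∈ Set.Ioc (0:ℝ) 1, ∀ b ∈ Set.Ioc (0:ℝ) 1, a ≤ b → w b ≤ w a :=
    fun a ha b hb hab => Real.rpow_le_rpow_of_nonpos ha.1 hab (by linarith)
  have hw_one : ∀ s ∈ Set.Ioc (0:ℝ) 1, 1 ≤ w s := by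
    intro s hs
    have := Real.rpow_le_rpow_of_exponent_ge hs.1 hs.2 (show γ - μ ≤ 0 by linarith)
    simpa [Real.rpow_zero] using this
  have hu_nn : ∀ s ∈ Set.Ioc (0:ℝ) 1, 0 ≤ u s := fun s hs =>
    div_nonneg (Real.rpow_nonneg (by linarith [hs.2]) lam)
      (Real.rpow_pos_of_pos hs.1 γ).le
  constructor
  · intro a ha b hb hab
    rcases eq_or_lt_of_le ha.1 with h0 | h0
    · rcases eq_or_lt_of_le hb.1 with h0' | h0'
      · rw [← h0, ← h0']
      · rw [← h0, hτ0]
        exact hτnn b ⟨h0', hb.2⟩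
    · have hA : a ∈ Set.Ioc (0:ℝ) 1 := ⟨h0, ha.2⟩
      have hB : b ∈ Set.Ioc (0:ℝ) 1 := ⟨lt_of_lt_of_le h0 hab, hb.2⟩
      rw [hτ' a hA, hτ' b hB]
      exact tau_key TM (u a) (u b) (w a) (w b) hTM (hu_nn b hB)
        (hu_anti a hA b hB hab) (hw_one b hB) (hw_anti a hA b hB hab)
  · have h1 : (1:ℝ) ∈ Set.Ioc (0:ℝ) 1 := ⟨one_pos, le_refl 1⟩
    rw [hτ 1 h1]
    simp [Real.zero_rpow (ne_of_gt hlam), Real.one_rpow]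
end

section
/- Let μ, λ, γ, β1, β2, T_M be real parameters with μ > γ ≥ β1 > 0, λ ≥ β2 > 0 and T_M > 1, and let g, h : [0,1] → ℝ be continuous and strictly positive. With a(s) = s^μ (1-s)^λ / (s^μ + (1-s)^λ), τ(s) = (s^μ/(s^μ + (1-s)^λ)) · (T_M + (1-s)^λ/s^γ), and -P_c'(s) = g(s)/s^{β1} + h(s)/(1-s)^{β2} for s ∈ (0,1), the function s ↦ a(s) · P_c'(s) / τ(s) is bounded on (0,1), i.e. sup_{s ∈ (0,1)} |a(s) P_c'(s) / τ(s)| < +∞. -/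
/-- Under hypotheses (H1)–(H3) of the paper, with
`a(s) = s^μ(1-s)^λ/(s^μ+(1-s)^λ)`,
`τ(s) = s^μ/(s^μ+(1-s)^λ)·(T_M + (1-s)^λ/s^γ)` and
`-P_c'(s) = g(s)/s^{β₁} + h(s)/(1-s)^{β₂}` on `(0,1)`,
the quantity `a·P_c'/τ` is bounded on `(0,1)`. -/
theorem a_Pc_over_tau_bounded
    (μ lam γ β1 β2 TM : ℝ)
    (hβ1 : 0 < β1) (hβ1γ : β1 ≤ γ) (hγμ : γ < μ)
    (hβ2 : 0 < β2) (hβ2lam : β2 ≤ lam) (hTM : 1 < TM)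
    (g h : ℝ → ℝ)
    (hg : ContinuousOn g (Set.Icc 0 1)) (hh : ContinuousOn h (Set.Icc 0 1))
    (hgpos : ∀ s ∈ Set.Icc (0:ℝ) 1, 0 < g s)
    (hhpos : ∀ s ∈ Set.Icc (0:ℝ) 1, 0 < h s)
    (a τ Pc' : ℝ → ℝ)
    (ha : ∀ s ∈ Set.Ioo (0:ℝ) 1,
      a s = s ^ μ * (1 - s) ^ lam / (s ^ μ + (1 - s) ^ lam))
    (hτ : ∀ s ∈ Set.Ioo (0:ℝ) 1,
      τ s = (s ^ μ / (s ^ μ + (1 - s) ^ lam)) * (TM + (1 - s) ^ lam / s ^ γ))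
    (hPc : ∀ s ∈ Set.Ioo (0:ℝ) 1,
      -Pc' s = g s / s ^ β1 + h s / (1 - s) ^ β2) :
    ∃ C : ℝ, ∀ s ∈ Set.Ioo (0:ℝ) 1, |a s * Pc' s / τ s| ≤ C := by
  obtain ⟨Mg, hMg⟩ := isCompact_Icc.exists_bound_of_continuousOn hg
  obtain ⟨Mh, hMh⟩ := isCompact_Icc.exists_bound_of_continuousOn hh
  refine ⟨Mg + Mh, ?_⟩
  intro s hs
  obtain ⟨hs0, hs1⟩ := hs
  have h1s : (0:ℝ) < 1 - s := by linarith
  have hmem : s ∈ Set.Icc (0:ℝ) 1 := ⟨hs0.le, hs1.le⟩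
  have hgs := hgpos s hmem
  have hhs := hhpos s hmem
  have hgM : g s ≤ Mg := (le_abs_self _).trans (hMg s hmem)
  have hhM : h s ≤ Mh := (le_abs_self _).trans (hMh s hmem)
  have hMg0 : 0 < Mg := lt_of_lt_of_le hgs hgM
  have hMh0 : 0 < Mh := lt_of_lt_of_le hhs hhM
  have hsμ : 0 < s ^ μ := Real.rpow_pos_of_pos hs0 μ
  have hsγ : 0 < s ^ γ := Real.rpow_pos_of_pos hs0 γ
  have hsβ1 : 0 < s ^ β1 := Real.rpow_pos_of_pos hs0 β1
  have h1l : 0 < (1 - s) ^ lam := Real.rpow_pos_of_pos h1s lam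
  have h1β2 : 0 < (1 - s) ^ β2 := Real.rpow_pos_of_pos h1s β2
  have hD : 0 < s ^ μ + (1 - s) ^ lam := by positivity
  have hE : 0 < TM + (1 - s) ^ lam / s ^ γ := by
    have : 0 < (1 - s) ^ lam / s ^ γ := div_pos h1l hsγ
    linarith
  have hPcs : Pc' s = -(g s / s ^ β1 + h s / (1 - s) ^ β2) := by
    have := hPc s ⟨hs0, hs1⟩; linarith
  rw [ha s ⟨hs0, hs1⟩, hτ s ⟨hs0, hs1⟩, hPcs]
  set E := TM + (1 - s) ^ lam / s ^ γ with hEdef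
  have key : s ^ μ * (1 - s) ^ lam / (s ^ μ + (1 - s) ^ lam) *
      -(g s / s ^ β1 + h s / (1 - s) ^ β2) / (s ^ μ / (s ^ μ + (1 - s) ^ lam) * E)
      = -((1 - s) ^ lam * (g s / s ^ β1) / E + (1 - s) ^ lam * (h s / (1 - s) ^ β2) / E) := by
    field_simp
  rw [key, abs_neg, abs_of_nonneg (by positivity)]
  have hE1 : (1 - s) ^ lam / s ^ γ ≤ E := by
    rw [hEdef]; linarith
  have hTME : TM ≤ E := by
    have : 0 < (1 - s) ^ lam / s ^ γ := div_pos h1l hsγ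
    rw [hEdef]; linarith
  have t1 : (1 - s) ^ lam * (g s / s ^ β1) / E ≤ Mg := by
    rw [div_le_iff₀ hE]
    have hdiv : g s / s ^ β1 ≤ Mg / s ^ γ := by
      rw [div_le_div_iff₀ hsβ1 hsγ]
      have hsplit : s ^ γ = s ^ β1 * s ^ (γ - β1) := by
        rw [← Real.rpow_add hs0]; ring_nf
      have hle1 : s ^ (γ - β1) ≤ 1 :=
        Real.rpow_le_one hs0.le hs1.le (by linarith)
      have hpos : 0 < s ^ (γ - β1) := Real.rpow_pos_of_pos hs0 _
      rw [hsplit]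
      nlinarith [mul_le_mul_of_nonneg_right
        (mul_le_mul hgM hle1 hpos.le hMg0.le) hsβ1.le]
    calc (1 - s) ^ lam * (g s / s ^ β1) ≤ (1 - s) ^ lam * (Mg / s ^ γ) :=
          mul_le_mul_of_nonneg_left hdiv h1l.le
      _ = Mg * ((1 - s) ^ lam / s ^ γ) := by ring
      _ ≤ Mg * E := mul_le_mul_of_nonneg_left hE1 hMg0.le
  have t2 : (1 - s) ^ lam * (h s / (1 - s) ^ β2) / E ≤ Mh := by
    rw [div_le_iff₀ hE]
    have step : (1 - s) ^ lam * (h s / (1 - s) ^ β2) ≤ Mh := by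
      have hsplit : (1 - s) ^ lam = (1 - s) ^ β2 * (1 - s) ^ (lam - β2) := by
        rw [← Real.rpow_add h1s]; ring_nf
      have hle1 : (1 - s) ^ (lam - β2) ≤ 1 :=
        Real.rpow_le_one h1s.le (by linarith) (by linarith)
      have hpos : 0 < (1 - s) ^ (lam - β2) := Real.rpow_pos_of_pos h1s _
      have hc : (1 - s) ^ β2 * (h s / (1 - s) ^ β2) = h s := by
        field_simp
      rw [hsplit, mul_comm ((1-s)^β2), mul_assoc, hc]
      nlinarith
    calc (1 - s) ^ lam * (h s / (1 - s) ^ β2) ≤ Mh := step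
      _ = Mh * 1 := by ring
      _ ≤ Mh * E := mul_le_mul_of_nonneg_left (by linarith) hMh0.le
  linarith
end

section
/- Let μ, λ, γ, T_M be real parameters with μ > γ > 2, λ > 2 and T_M > 1. With a(s) = s^μ (1-s)^λ / (s^μ + (1-s)^λ) and τ(s) = (s^μ/(s^μ + (1-s)^λ)) · (T_M + (1-s)^λ/s^γ) for s ∈ (0,1), the following three functions are bounded on (0,1): s ↦ a(s) τ'(s)/τ(s), s ↦ √(a(s)) τ'(s)/τ(s), and s ↦ a(s) τ(s)². -/
private lemma absE_aux (X Y U V D N : ℝ) (hX : 0 ≤ X) (hY : 0 ≤ Y) (hU : 0 ≤ U)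
    (hV : 0 ≤ V) (hD : 0 ≤ D) (hN : 0 ≤ N) :
    |(X - Y) * D - N * (U - V)| ≤ (X + Y) * D + N * (U + V) := by
  rw [abs_le]
  constructor <;>
    nlinarith [mul_nonneg hX hD, mul_nonneg hY hD, mul_nonneg hN hU, mul_nonneg hN hV]

private lemma la1_aux (μ TM p q m1 D N : ℝ) (hμ : 0 < μ) (hTM : 0 < TM) (hp : 0 < p)
    (hq : 0 < q) (hN : 0 < N) (hm10 : 0 ≤ m1) (hm11 : m1 ≤ 1) (hqD : q ≤ D)
    (hTMpN : TM * p ≤ N) : p * q * (TM * (μ * m1)) ≤ μ * (D * N) := by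
  have h1 : TM * p * q ≤ N * D := mul_le_mul hTMpN hqD hq.le hN.le
  have h2 : TM * p * q * m1 ≤ TM * p * q * 1 :=
    mul_le_mul_of_nonneg_left hm11 (by positivity)
  calc p * q * (TM * (μ * m1)) = μ * (TM * p * q * m1) := by ring
  _ ≤ μ * (TM * p * q * 1) := mul_le_mul_of_nonneg_left h2 hμ.le
  _ ≤ μ * (N * D) := by nlinarith
  _ = μ * (D * N) := by ring

private lemma la2_aux (c s p q m2 r D N : ℝ) (hc : 0 ≤ c) (hq : 0 < q) (hN : 0 < N)
    (hm2 : 0 ≤ m2) (hps : p ≤ s) (hsm2 : s * m2 = r) (hrqN : r * q ≤ N) (hqD : q ≤ D) :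
    p * q * (c * (m2 * q)) ≤ c * (D * N) := by
  have h1 : p * (m2 * q * q) ≤ s * (m2 * q * q) :=
    mul_le_mul_of_nonneg_right hps (by positivity)
  have h2 : s * (m2 * q * q) = (r * q) * q := by rw [← hsm2]; ring
  have h3 : (r * q) * q ≤ N * D := mul_le_mul hrqN hqD hq.le hN.le
  have h4 : p * (m2 * q * q) ≤ N * D := by
    calc p * (m2 * q * q) ≤ s * (m2 * q * q) := h1
    _ = (r * q) * q := h2
    _ ≤ N * D := h3
  calc p * q * (c * (m2 * q)) = c * (p * (m2 * q * q)) := by ring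
  _ ≤ c * (N * D) := mul_le_mul_of_nonneg_left h4 hc
  _ = c * (D * N) := by ring

private lemma la3_aux (lam p q r n1 D N : ℝ) (hlam : 0 < lam) (hp : 0 < p) (hq : 0 < q)
    (hN : 0 < N) (hr0 : 0 ≤ r) (hr1 : r ≤ 1) (hn10 : 0 ≤ n1) (hn11 : n1 ≤ 1)
    (hpN : p ≤ N) (hqD : q ≤ D) : p * q * (r * (lam * n1)) ≤ lam * (D * N) := by
  have h1 : r * n1 ≤ 1 := mul_le_one₀ hr1 hn10 hn11
  have h2 : p * q ≤ N * D := mul_le_mul hpN hqD hq.le hN.le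
  have h3 : p * q * (r * n1) ≤ p * q * 1 :=
    mul_le_mul_of_nonneg_left h1 (by positivity)
  nlinarith
private lemma lb_aux (c p q m D : ℝ) (hc : 0 ≤ c) (hp : 0 < p) (hq : 0 < q)
    (hm0 : 0 ≤ m) (hm1 : m ≤ 1) (hpD : p ≤ D) (hqD : q ≤ D) :
    p * q * (c * m) ≤ c * D ^ 2 := by
  have h2 : p * q ≤ D * D := mul_le_mul hpD hqD hq.le (by linarith)
  have h3 : p * q * m ≤ p * q * 1 := mul_le_mul_of_nonneg_left hm1 (by positivity)
  nlinarith

private lemma lc1_aux (μ TM sa ph m1 e1 p N : ℝ) (hμ : 0 < μ) (hTM : 0 < TM)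
    (hsa0 : 0 ≤ sa) (hsap : sa ≤ ph) (hphe1 : ph * e1 = m1) (hph2 : ph * ph = p)
    (hm10 : 0 ≤ m1) (he11 : e1 ≤ 1) (he10 : 0 ≤ e1) (hp : 0 < p) (hph : 0 < ph)
    (hTMpN : TM * p ≤ N) : sa * (TM * (μ * m1)) ≤ μ * N := by
  have h1 : sa * m1 ≤ p := by
    calc sa * m1 ≤ ph * m1 := mul_le_mul_of_nonneg_right hsap hm10
    _ = p * e1 := by rw [← hphe1, ← hph2]; ring
    _ ≤ p := mul_le_of_le_one_right hp.le he11
  calc sa * (TM * (μ * m1)) = μ * (TM * (sa * m1)) := by ring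
  _ ≤ μ * (TM * p) := by
      apply mul_le_mul_of_nonneg_left (mul_le_mul_of_nonneg_left h1 hTM.le) hμ.le
  _ ≤ μ * N := mul_le_mul_of_nonneg_left hTMpN hμ.le

private lemma lc2_aux (c s sa m2 q r N : ℝ) (hc : 0 ≤ c) (hsa0 : 0 ≤ sa) (hsas : sa ≤ s)
    (hm2 : 0 ≤ m2) (hq : 0 < q) (hsm2 : s * m2 = r) (hrqN : r * q ≤ N) :
    sa * (c * (m2 * q)) ≤ c * N := by
  have h1 : sa * (m2 * q) ≤ s * (m2 * q) := mul_le_mul_of_nonneg_right hsas (by positivity)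
  have h2 : s * (m2 * q) = r * q := by rw [← hsm2]; ring
  have h3 : sa * (m2 * q) ≤ N := by linarith
  calc sa * (c * (m2 * q)) = c * (sa * (m2 * q)) := by ring
  _ ≤ c * N := mul_le_mul_of_nonneg_left h3 hc

private lemma lc3_aux (lam sa qh n1 e2 q r N : ℝ) (hlam : 0 < lam) (hsa0 : 0 ≤ sa)
    (hsaq : sa ≤ qh) (hqhe2 : qh * e2 = n1) (hqh2 : qh * qh = q) (hn10 : 0 ≤ n1)
    (he21 : e2 ≤ 1) (hq : 0 < q) (hr0 : 0 ≤ r) (hrqN : r * q ≤ N) :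
    sa * (r * (lam * n1)) ≤ lam * N := by
  have h1 : sa * n1 ≤ q := by
    calc sa * n1 ≤ qh * n1 := mul_le_mul_of_nonneg_right hsaq hn10
    _ = q * e2 := by rw [← hqhe2, ← hqh2]; ring
    _ ≤ q := mul_le_of_le_one_right hq.le he21
  have h2 : r * (sa * n1) ≤ r * q := mul_le_mul_of_nonneg_left h1 hr0
  calc sa * (r * (lam * n1)) = lam * (r * (sa * n1)) := by ring
  _ ≤ lam * (r * q) := mul_le_mul_of_nonneg_left h2 hlam.le
  _ ≤ lam * N := mul_le_mul_of_nonneg_left hrqN hlam.le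

private lemma keyC_aux (TM p q N D : ℝ) (hp0 : 0 < p) (hq0 : 0 < q) (hN0 : 0 < N)
    (hD0 : 0 < D) (hTM : 0 < TM) (hp1 : p ≤ 1) (hqD : q ≤ D) (hND : N ≤ TM * D) :
    p * q * N ^ 2 ≤ TM ^ 2 * D ^ 3 := by
  have h1 : N ^ 2 ≤ (TM * D) ^ 2 := by nlinarith
  have h2 : p * q ≤ D := by nlinarith
  calc p * q * N ^ 2 ≤ D * (TM * D) ^ 2 :=
    mul_le_mul h2 h1 (by positivity) hD0.le
  _ = TM ^ 2 * D ^ 3 := by ring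

/-- Under hypotheses (H1), (H2), (H6) of the paper (`μ > γ > 2`, `λ > 2`, `T_M > 1`),
the functions `a·τ'/τ`, `√a·τ'/τ` and `a·τ²` are bounded on `(0,1)`,
where `τ'` denotes the derivative of `τ` on `(0,1)`. -/
theorem coefficient_bounds_with_tau_derivative
    (μ lam γ TM : ℝ) (hγ : 2 < γ) (hγμ : γ < μ) (hlam : 2 < lam) (hTM : 1 < TM)
    (a τ τ' : ℝ → ℝ)
    (ha : ∀ s ∈ Set.Ioo (0:ℝ) 1,
      a s = s ^ μ * (1 - s) ^ lam / (s ^ μ + (1 - s) ^ lam))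
    (hτ : ∀ s ∈ Set.Ioo (0:ℝ) 1,
      τ s = (s ^ μ / (s ^ μ + (1 - s) ^ lam)) * (TM + (1 - s) ^ lam / s ^ γ))
    (hτ' : ∀ s ∈ Set.Ioo (0:ℝ) 1, HasDerivAt τ (τ' s) s) :
    ∃ C : ℝ, ∀ s ∈ Set.Ioo (0:ℝ) 1,
      |a s * τ' s / τ s| ≤ C ∧
      |Real.sqrt (a s) * τ' s / τ s| ≤ C ∧
      |a s * (τ s) ^ 2| ≤ C := by
  set F : ℝ → ℝ := fun x =>
    (TM * x ^ μ + x ^ (μ - γ) * (1 - x) ^ lam) / (x ^ μ + (1 - x) ^ lam) with hF_def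
  have hτF : ∀ x ∈ Set.Ioo (0:ℝ) 1, τ x = F x := by
    intro x hx
    obtain ⟨hx0, hx1⟩ := hx
    have htx : (0:ℝ) < 1 - x := by linarith
    have hD0 : x ^ μ + (1 - x) ^ lam ≠ 0 := by positivity
    have hγ0 : x ^ γ ≠ 0 := by positivity
    have hsub : x ^ (μ - γ) = x ^ μ / x ^ γ := Real.rpow_sub hx0 μ γ
    rw [hτ x ⟨hx0, hx1⟩, hF_def]
    field_simp [hsub]
    rw [hsub]; field_simp
  refine ⟨(2*μ - γ + lam) + (μ + lam) + TM^2, ?_⟩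
  intro s hs
  obtain ⟨hs0, hs1⟩ := hs
  have ht0 : (0:ℝ) < 1 - s := by linarith
  have ht1 : 1 - s < 1 := by linarith
  set p := s ^ μ with hp_def
  set q := (1 - s) ^ lam with hq_def
  set r := s ^ (μ - γ) with hr_def
  set m1 := s ^ (μ - 1) with hm1_def
  set m2 := s ^ (μ - γ - 1) with hm2_def
  set n1 := (1 - s) ^ (lam - 1) with hn1_def
  set ph := s ^ (μ/2) with hph_def
  set qh := (1 - s) ^ (lam/2) with hqh_def
  set e1 := s ^ (μ/2 - 1) with he1_def
  set e2 := (1 - s) ^ (lam/2 - 1) with he2_def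
  have hp0 : 0 < p := Real.rpow_pos_of_pos hs0 _
  have hq0 : 0 < q := Real.rpow_pos_of_pos ht0 _
  have hr0 : 0 < r := Real.rpow_pos_of_pos hs0 _
  have hm10 : 0 < m1 := Real.rpow_pos_of_pos hs0 _
  have hm20 : 0 < m2 := Real.rpow_pos_of_pos hs0 _
  have hn10 : 0 < n1 := Real.rpow_pos_of_pos ht0 _
  have hph0 : 0 < ph := Real.rpow_pos_of_pos hs0 _
  have hqh0 : 0 < qh := Real.rpow_pos_of_pos ht0 _
  have he10 : 0 < e1 := Real.rpow_pos_of_pos hs0 _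
  have he20 : 0 < e2 := Real.rpow_pos_of_pos ht0 _
  have hp1 : p ≤ 1 := Real.rpow_le_one hs0.le hs1.le (by linarith)
  have hq1 : q ≤ 1 := Real.rpow_le_one ht0.le ht1.le (by linarith)
  have hr1 : r ≤ 1 := Real.rpow_le_one hs0.le hs1.le (by linarith)
  have hm11 : m1 ≤ 1 := Real.rpow_le_one hs0.le hs1.le (by linarith)
  have hn11 : n1 ≤ 1 := Real.rpow_le_one ht0.le ht1.le (by linarith)
  have he11 : e1 ≤ 1 := Real.rpow_le_one hs0.le hs1.le (by linarith)
  have he21 : e2 ≤ 1 := Real.rpow_le_one ht0.le ht1.le (by linarith)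
  have hps : p ≤ s := by
    rw [hp_def]
    calc s ^ μ ≤ s ^ (1:ℝ) := Real.rpow_le_rpow_of_exponent_ge hs0 hs1.le (by linarith)
    _ = s := Real.rpow_one s
  have hphs : ph ≤ s := by
    rw [hph_def]
    calc s ^ (μ/2) ≤ s ^ (1:ℝ) := Real.rpow_le_rpow_of_exponent_ge hs0 hs1.le (by linarith)
    _ = s := Real.rpow_one s
  have hsm2 : s * m2 = r := by
    rw [hm2_def, hr_def, Real.rpow_sub hs0 (μ - γ) 1, Real.rpow_one]; field_simp
  have hph2 : ph * ph = p := by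
    rw [hph_def, hp_def, ← Real.rpow_add hs0]; ring_nf
  have hqh2 : qh * qh = q := by
    rw [hqh_def, hq_def, ← Real.rpow_add ht0]; ring_nf
  have hphe1 : ph * e1 = m1 := by
    rw [hph_def, he1_def, hm1_def, ← Real.rpow_add hs0]; ring_nf
  have hqhe2 : qh * e2 = n1 := by
    rw [hqh_def, he2_def, hn1_def, ← Real.rpow_add ht0]; ring_nf
  set D := p + q with hD_def
  set N := TM * p + r * q with hN_def
  have hTM0 : (0:ℝ) < TM := by linarith
  have hD0 : 0 < D := by positivity
  have hN0 : 0 < N := by positivity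
  have hpD : p ≤ D := by rw [hD_def]; linarith
  have hqD : q ≤ D := by rw [hD_def]; linarith
  have hTMpN : TM * p ≤ N := by
    rw [hN_def]; exact le_add_of_nonneg_right (by positivity)
  have hrqN : r * q ≤ N := by
    rw [hN_def]; exact le_add_of_nonneg_left (by positivity)
  have hpN : p ≤ N := (le_mul_of_one_le_left hp0.le hTM.le).trans hTMpN
  have hND : N ≤ TM * D := by
    have h1 : r * q ≤ TM * q := mul_le_mul (hr1.trans hTM.le) le_rfl hq0.le hTM0.le
    rw [hN_def, hD_def]; linarith only [h1]
  have haa : a s = p * q / D := ha s ⟨hs0, hs1⟩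
  have hττ : τ s = N / D := by
    rw [hτF s ⟨hs0, hs1⟩]
  set E := ((TM * (μ * m1) + ((μ - γ) * m2 * q + r * (lam * n1 * (-1)))) * D
      - N * (μ * m1 + lam * n1 * (-1))) with hE_def
  have hFd : HasDerivAt F (E / D ^ 2) s := by
    have h1 : HasDerivAt (fun x : ℝ => x ^ μ) (μ * s ^ (μ - 1)) s :=
      Real.hasDerivAt_rpow_const (Or.inl hs0.ne')
    have hg : HasDerivAt (fun x : ℝ => 1 - x) (-1) s := by
      simpa using (hasDerivAt_id s).const_sub 1
    have h2 : HasDerivAt (fun x : ℝ => (1 - x) ^ lam) (lam * (1 - s) ^ (lam - 1) * (-1)) s :=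
      (Real.hasDerivAt_rpow_const (p := lam) (Or.inl ht0.ne')).comp s hg
    have h3 : HasDerivAt (fun x : ℝ => x ^ (μ - γ)) ((μ - γ) * s ^ (μ - γ - 1)) s :=
      Real.hasDerivAt_rpow_const (Or.inl hs0.ne')
    have hD0' : s ^ μ + (1 - s) ^ lam ≠ 0 := by positivity
    have hder := ((h1.const_mul TM).add (h3.mul h2)).div (h1.add h2) hD0'
    exact hder
  have hττ' : τ' s = E / D ^ 2 := by
    have hev : τ =ᶠ[nhds s] F :=
      Filter.eventuallyEq_of_mem (Ioo_mem_nhds hs0 hs1) hτF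
    exact (hτ' s ⟨hs0, hs1⟩).unique (hFd.congr_of_eventuallyEq hev)
  set Na := TM * (μ * m1) + (μ - γ) * (m2 * q) + r * (lam * n1) with hNa_def
  set Da := μ * m1 + lam * n1 with hDa_def
  have hμ0 : (0:ℝ) < μ := by linarith
  have hγμ0 : (0:ℝ) < μ - γ := by linarith
  have hlam0 : (0:ℝ) < lam := by linarith
  have hNa0 : 0 < Na := by positivity
  have hDa0 : 0 < Da := by positivity
  have hEabs : |E| ≤ Na * D + N * Da := by
    have h := absE_aux (TM * (μ * m1) + (μ - γ) * (m2 * q)) (r * (lam * n1))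
      (μ * m1) (lam * n1) D N (by positivity) (by positivity) (by positivity)
      (by positivity) hD0.le hN0.le
    calc |E| = |(TM * (μ * m1) + (μ - γ) * (m2 * q) - r * (lam * n1)) * D
        - N * (μ * m1 - lam * n1)| := by rw [hE_def]; ring_nf
    _ ≤ (TM * (μ * m1) + (μ - γ) * (m2 * q) + r * (lam * n1)) * D
        + N * (μ * m1 + lam * n1) := h
    _ = Na * D + N * Da := by rw [hNa_def, hDa_def]
  have LA : p * q * Na ≤ (2*μ - γ + lam) * (D * N) := by
    have l1 := la1_aux μ TM p q m1 D N hμ0 hTM0 hp0 hq0 hN0 hm10.le hm11 hqD hTMpN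
    have l2 := la2_aux (μ - γ) s p q m2 r D N hγμ0.le hq0 hN0 hm20.le hps hsm2 hrqN hqD
    have l3 := la3_aux lam p q r n1 D N hlam0 hp0 hq0 hN0 hr0.le hr1 hn10.le hn11 hpN hqD
    rw [hNa_def]; linarith only [l1, l2, l3]
  have LB : p * q * Da ≤ (μ + lam) * D ^ 2 := by
    have l1 := lb_aux μ p q m1 D hμ0.le hp0 hq0 hm10.le hm11 hpD hqD
    have l2 := lb_aux lam p q n1 D hlam0.le hp0 hq0 hn10.le hn11 hpD hqD
    rw [hDa_def]; linarith only [l1, l2]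
  set sa := Real.sqrt (a s) with hsa_def
  have hsa0 : 0 ≤ sa := Real.sqrt_nonneg _
  have hsap : sa ≤ ph := by
    rw [hsa_def, haa]
    have h1 : p * q / D ≤ p := by
      rw [div_le_iff₀ hD0]; exact mul_le_mul_of_nonneg_left hqD hp0.le
    calc Real.sqrt (p * q / D) ≤ Real.sqrt p := Real.sqrt_le_sqrt h1
    _ = ph := by rw [show p = ph ^ 2 by rw [sq]; exact hph2.symm, Real.sqrt_sq hph0.le]
  have hsaq : sa ≤ qh := by
    rw [hsa_def, haa]
    have h1 : p * q / D ≤ q := by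
      rw [div_le_iff₀ hD0]
      have := mul_le_mul_of_nonneg_right hpD hq0.le
      linarith only [this]
    calc Real.sqrt (p * q / D) ≤ Real.sqrt q := Real.sqrt_le_sqrt h1
    _ = qh := by rw [show q = qh ^ 2 by rw [sq]; exact hqh2.symm, Real.sqrt_sq hqh0.le]
  have LC : sa * Na ≤ (2*μ - γ + lam) * N := by
    have l1 := lc1_aux μ TM sa ph m1 e1 p N hμ0 hTM0 hsa0 hsap hphe1 hph2 hm10.le
      he11 he10.le hp0 hph0 hTMpN
    have l2 := lc2_aux (μ - γ) s sa m2 q r N hγμ0.le hsa0 (hsap.trans hphs) hm20.le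
      hq0 hsm2 hrqN
    have l3 := lc3_aux lam sa qh n1 e2 q r N hlam0 hsa0 hsaq hqhe2 hqh2 hn10.le
      he21 hq0 hr0.le hrqN
    rw [hNa_def]; linarith only [l1, l2, l3]
  have LD : sa * Da ≤ (μ + lam) * D := by
    have l1 : sa * m1 ≤ D := by
      calc sa * m1 ≤ ph * m1 := mul_le_mul_of_nonneg_right hsap hm10.le
      _ = p * e1 := by rw [← hphe1, ← hph2]; ring
      _ ≤ p := mul_le_of_le_one_right hp0.le he11
      _ ≤ D := hpD
    have l2 : sa * n1 ≤ D := by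
      calc sa * n1 ≤ qh * n1 := mul_le_mul_of_nonneg_right hsaq hn10.le
      _ = q * e2 := by rw [← hqhe2, ← hqh2]; ring
      _ ≤ q := mul_le_of_le_one_right hq0.le he21
      _ ≤ D := hqD
    have l1' : sa * (μ * m1) ≤ μ * D := by
      calc sa * (μ * m1) = μ * (sa * m1) := by ring
      _ ≤ μ * D := mul_le_mul_of_nonneg_left l1 hμ0.le
    have l2' : sa * (lam * n1) ≤ lam * D := by
      calc sa * (lam * n1) = lam * (sa * n1) := by ring
      _ ≤ lam * D := mul_le_mul_of_nonneg_left l2 hlam0.le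
    rw [hDa_def]; linarith only [l1', l2']
  refine ⟨?_, ?_, ?_⟩
  · rw [haa, hττ, hττ']
    have hexpr : p * q / D * (E / D ^ 2) / (N / D) = p * q * E / (D ^ 2 * N) := by
      field_simp
    rw [hexpr, abs_div, abs_of_pos (show (0:ℝ) < D ^ 2 * N by positivity), abs_mul,
      abs_of_pos (show (0:ℝ) < p * q by positivity), div_le_iff₀ (by positivity)]
    have k1 : p * q * |E| ≤ p * q * (Na * D + N * Da) :=
      mul_le_mul_of_nonneg_left hEabs (by positivity)
    have k3 : (p * q * Na) * D ≤ ((2*μ - γ + lam) * (D * N)) * D :=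
      mul_le_mul_of_nonneg_right LA hD0.le
    have k4 : (p * q * Da) * N ≤ ((μ + lam) * D ^ 2) * N :=
      mul_le_mul_of_nonneg_right LB hN0.le
    have k6 : 0 ≤ TM ^ 2 * (D ^ 2 * N) := by positivity
    linarith only [k1, k3, k4, k6]
  · rw [hττ, hττ']
    have hexpr : sa * (E / D ^ 2) / (N / D) = sa * E / (D * N) := by
      field_simp
    rw [hexpr, abs_div, abs_of_pos (show (0:ℝ) < D * N by positivity), abs_mul,
      abs_of_nonneg hsa0, div_le_iff₀ (by positivity)]
    have k1 : sa * |E| ≤ sa * (Na * D + N * Da) :=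
      mul_le_mul_of_nonneg_left hEabs hsa0
    have k3 : (sa * Na) * D ≤ ((2*μ - γ + lam) * N) * D :=
      mul_le_mul_of_nonneg_right LC hD0.le
    have k4 : (sa * Da) * N ≤ ((μ + lam) * D) * N :=
      mul_le_mul_of_nonneg_right LD hN0.le
    have k6 : 0 ≤ TM ^ 2 * (D * N) := by positivity
    linarith only [k1, k3, k4, k6]
  · rw [haa, hττ]
    have hval : p * q / D * (N / D) ^ 2 = p * q * N ^ 2 / D ^ 3 := by
      field_simp
    rw [hval, abs_of_pos (show (0:ℝ) < p * q * N ^ 2 / D ^ 3 by positivity),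
      div_le_iff₀ (by positivity)]
    have key := keyC_aux TM p q N D hp0 hq0 hN0 hD0 hTM0 hp1 hqD hND
    have k6 : 0 ≤ ((2*μ - γ + lam) + (μ + lam)) * D ^ 3 :=
      mul_nonneg (by linarith) (by positivity)
    linarith only [key, k6]
end

section
/- Let γ > 2, λ > 2, T_M > 1, and fix 0 < S_min ≤ S_max < 1. There exist positive constants C and D, depending only on γ, λ, T_M, S_min, S_max (and in particular independent of ε), such that for every ε ∈ (0, 1/4], every S_D ∈ [S_min, S_max], and every s ∈ ℝ, the regularized entropy satisfies E_ε(s) ≥ C·( Z_ε(s)^{2-γ} + (1 − Z_ε(s))^{2-λ} ) − D. -/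
/-- The cutting function `Z(s) = min(max(s,0),1)`. -/
noncomputable def Z (s : ℝ) : ℝ := min (max s 0) 1

/-- The regularized cutting function `Z_ε(s) = (1−2ε)Z(s) + ε`. -/
noncomputable def Zeps (ε s : ℝ) : ℝ := (1 - 2 * ε) * Z s + ε

/-- The integrand `h_ε(ξ) = Z_ε(ξ)^{-γ} + T_M (1 − Z_ε(ξ))^{-λ}` of the regularized entropy. -/
noncomputable def heps (γ lam TM ε ξ : ℝ) : ℝ :=
  Zeps ε ξ ^ (-γ) + TM * (1 - Zeps ε ξ) ^ (-lam)

/-- The regularized entropy with base point `S_D`: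
`E_ε(s) = s ∫_{S_D}^s h_ε(ξ) dξ − ∫_{S_D}^s ξ h_ε(ξ) dξ`. -/
noncomputable def Eeps (γ lam TM ε SD s : ℝ) : ℝ :=
  s * (∫ ξ in SD..s, heps γ lam TM ε ξ) - ∫ ξ in SD..s, ξ * heps γ lam TM ε ξ

section Aux

open intervalIntegral in
lemma integral_linear_aux (a b c : ℝ) : (∫ x in a..b, (x - c)) = (b^2 - a^2)/2 - (b - a) * c := by
  rw [integral_sub (continuous_id'.intervalIntegrable a b) intervalIntegrable_const,
      integral_id, integral_const]
  simp [smul_eq_mul]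

open intervalIntegral in
lemma integral_linear_aux' (a b c : ℝ) : (∫ x in a..b, (c - x)) = (b - a) * c - (b^2 - a^2)/2 := by
  rw [integral_sub intervalIntegrable_const (continuous_id'.intervalIntegrable a b),
      integral_id, integral_const]
  simp [smul_eq_mul]

lemma Z_nonneg (s : ℝ) : 0 ≤ Z s := le_min (le_max_right s 0) zero_le_one

lemma Z_le_one (s : ℝ) : Z s ≤ 1 := min_le_right _ _

lemma Z_mono : Monotone Z := fun _ _ h => min_le_min (max_le_max h le_rfl) le_rfl

lemma Z_cont : Continuous Z := (continuous_id.max continuous_const).min continuous_const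

variable {γ lam TM ε : ℝ}

lemma Zeps_cont (ε : ℝ) : Continuous (Zeps ε) :=
  (continuous_const.mul Z_cont).add continuous_const

lemma Zeps_mono (hε : ε ≤ 1/4) : Monotone (Zeps ε) := by
  intro x y h
  have h2 := Z_mono h
  unfold Zeps
  nlinarith

lemma Zeps_ge (hε0 : 0 < ε) (hε : ε ≤ 1/4) (s : ℝ) : ε ≤ Zeps ε s := by
  have h1 := Z_nonneg s
  unfold Zeps; nlinarith

lemma Zeps_le (hε0 : 0 < ε) (hε : ε ≤ 1/4) (s : ℝ) : Zeps ε s ≤ 1 - ε := by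
  have h1 := Z_le_one s
  have h2 := Z_nonneg s
  unfold Zeps; nlinarith

lemma Zeps_pos (hε0 : 0 < ε) (hε : ε ≤ 1/4) (s : ℝ) : 0 < Zeps ε s :=
  lt_of_lt_of_le hε0 (Zeps_ge hε0 hε s)

lemma Zeps_lt_one (hε0 : 0 < ε) (hε : ε ≤ 1/4) (s : ℝ) : 0 < 1 - Zeps ε s := by
  have := Zeps_le hε0 hε s; linarith

lemma heps_cont (γ lam TM : ℝ) (hε0 : 0 < ε) (hε : ε ≤ 1/4) :
    Continuous (heps γ lam TM ε) := by
  rw [continuous_iff_continuousAt]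
  intro x
  unfold heps
  apply ContinuousAt.add
  · exact ((Zeps_cont ε).continuousAt).rpow_const (Or.inl (Zeps_pos hε0 hε x).ne')
  · exact continuousAt_const.mul
      (((continuous_const.sub (Zeps_cont ε)).continuousAt).rpow_const
        (Or.inl (Zeps_lt_one hε0 hε x).ne'))

lemma heps_nonneg (hTM : 0 ≤ TM) (hε0 : 0 < ε) (hε : ε ≤ 1/4) (ξ : ℝ) :
    0 ≤ heps γ lam TM ε ξ := by
  have h1 := Real.rpow_nonneg (Zeps_pos hε0 hε ξ).le (-γ)
  have h2 := Real.rpow_nonneg (Zeps_lt_one hε0 hε ξ).le (-lam)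
  unfold heps; nlinarith

lemma Eeps_eq (hε0 : 0 < ε) (hε : ε ≤ 1/4) (SD s : ℝ) :
    Eeps γ lam TM ε SD s = ∫ ξ in SD..s, (s - ξ) * heps γ lam TM ε ξ := by
  have hc := heps_cont (ε := ε) γ lam TM hε0 hε
  unfold Eeps
  rw [← intervalIntegral.integral_const_mul,
      ← intervalIntegral.integral_sub (f := fun x => s * heps γ lam TM ε x)
        (g := fun x => x * heps γ lam TM ε x) ((continuous_const.mul hc).intervalIntegrable _ _)
        ((continuous_id'.mul hc).intervalIntegrable _ _)]
  apply intervalIntegral.integral_congr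
  intro ξ _
  dsimp only [id]
  ring

lemma bump_left (hTM : 0 ≤ TM) (hε0 : 0 < ε) (hε : ε ≤ 1/4) {K SD s a t : ℝ}
    (hK : 0 ≤ K) (hsa : s ≤ a) (hat : a ≤ t) (htSD : t ≤ SD)
    (hb : ∀ ξ ∈ Set.Icc a t, K ≤ heps γ lam TM ε ξ) :
    K * (t - a) ^ 2 / 2 ≤ Eeps γ lam TM ε SD s := by
  have hc := heps_cont (ε := ε) γ lam TM hε0 hε
  have hEeq : Eeps γ lam TM ε SD s = ∫ ξ in s..SD, (ξ - s) * heps γ lam TM ε ξ := by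
    rw [Eeps_eq hε0 hε, intervalIntegral.integral_symm, ← intervalIntegral.integral_neg]
    apply intervalIntegral.integral_congr
    intro ξ _
    dsimp only
    ring
  rw [hEeq]
  have hint : ∀ u v : ℝ,
      IntervalIntegrable (fun ξ => (ξ - s) * heps γ lam TM ε ξ) MeasureTheory.volume u v :=
    fun u v => ((continuous_sub_right s).mul hc).intervalIntegrable u v
  have step1 : (∫ ξ in a..t, (ξ - s) * heps γ lam TM ε ξ)
      ≤ ∫ ξ in s..SD, (ξ - s) * heps γ lam TM ε ξ := by
    apply intervalIntegral.integral_mono_interval hsa hat htSD ?_ (hint s SD)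
    apply MeasureTheory.ae_restrict_of_forall_mem measurableSet_Ioc
    intro x hx
    have h1 := heps_nonneg (γ := γ) (lam := lam) hTM hε0 hε x
    have h2 : s ≤ x := le_of_lt hx.1
    have : 0 ≤ (x - s) * heps γ lam TM ε x := mul_nonneg (by linarith) h1
    simpa using this
  have step2 : (∫ ξ in a..t, (ξ - a) * K)
      ≤ ∫ ξ in a..t, (ξ - s) * heps γ lam TM ε ξ := by
    apply intervalIntegral.integral_mono_on hat
      ((((continuous_sub_right a)).mul continuous_const).intervalIntegrable a t)
      (hint a t)
    intro x hx
    have h1 := hb x hx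
    have h2 := heps_nonneg (γ := γ) (lam := lam) hTM hε0 hε x
    have hxa : a ≤ x := hx.1
    show (x - a) * K ≤ (x - s) * heps γ lam TM ε x
    nlinarith [mul_nonneg (by linarith : (0:ℝ) ≤ x - a)
        (by linarith : (0:ℝ) ≤ heps γ lam TM ε x - K),
      mul_nonneg (by linarith : (0:ℝ) ≤ a - s) h2]
  have step3 : (∫ ξ in a..t, (ξ - a) * K) = K * (t - a) ^ 2 / 2 := by
    rw [intervalIntegral.integral_mul_const, integral_linear_aux]
    ring
  linarith

lemma bump_right (hTM : 0 ≤ TM) (hε0 : 0 < ε) (hε : ε ≤ 1/4) {K SD s t b : ℝ}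
    (hK : 0 ≤ K) (hSDt : SD ≤ t) (htb : t ≤ b) (hbs : b ≤ s)
    (hb : ∀ ξ ∈ Set.Icc t b, K ≤ heps γ lam TM ε ξ) :
    K * (b - t) ^ 2 / 2 ≤ Eeps γ lam TM ε SD s := by
  have hc := heps_cont (ε := ε) γ lam TM hε0 hε
  rw [Eeps_eq hε0 hε]
  have hint : ∀ u v : ℝ,
      IntervalIntegrable (fun ξ => (s - ξ) * heps γ lam TM ε ξ) MeasureTheory.volume u v :=
    fun u v => ((continuous_const.sub continuous_id').mul hc).intervalIntegrable u v
  have step1 : (∫ ξ in t..b, (s - ξ) * heps γ lam TM ε ξ)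
      ≤ ∫ ξ in SD..s, (s - ξ) * heps γ lam TM ε ξ := by
    apply intervalIntegral.integral_mono_interval hSDt htb hbs ?_ (hint SD s)
    apply MeasureTheory.ae_restrict_of_forall_mem measurableSet_Ioc
    intro x hx
    have h1 := heps_nonneg (γ := γ) (lam := lam) hTM hε0 hε x
    have h2 : x ≤ s := hx.2
    have : 0 ≤ (s - x) * heps γ lam TM ε x := mul_nonneg (by linarith) h1
    simpa using this
  have step2 : (∫ ξ in t..b, (b - ξ) * K)
      ≤ ∫ ξ in t..b, (s - ξ) * heps γ lam TM ε ξ := by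
    apply intervalIntegral.integral_mono_on htb
      (((continuous_const.sub continuous_id').mul continuous_const).intervalIntegrable t b)
      (hint t b)
    intro x hx
    have h1 := hb x hx
    have h2 := heps_nonneg (γ := γ) (lam := lam) hTM hε0 hε x
    have hxb : x ≤ b := hx.2
    show (b - x) * K ≤ (s - x) * heps γ lam TM ε x
    nlinarith [mul_nonneg (by linarith : (0:ℝ) ≤ b - x)
        (by linarith : (0:ℝ) ≤ heps γ lam TM ε x - K),
      mul_nonneg (by linarith : (0:ℝ) ≤ s - b) h2]
  have step3 : (∫ ξ in t..b, (b - ξ) * K) = K * (b - t) ^ 2 / 2 := by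
    rw [intervalIntegral.integral_mul_const, integral_linear_aux']
    ring
  linarith

lemma Eeps_nonneg (hTM : 0 ≤ TM) (hε0 : 0 < ε) (hε : ε ≤ 1/4) (SD s : ℝ) :
    0 ≤ Eeps γ lam TM ε SD s := by
  rcases le_total s SD with h | h
  · have := bump_left (γ := γ) (lam := lam) hTM hε0 hε (K := 0) (a := SD) (t := SD)
      le_rfl h le_rfl le_rfl (fun ξ _ => heps_nonneg hTM hε0 hε ξ)
    simpa using this
  · have := bump_right (γ := γ) (lam := lam) hTM hε0 hε (K := 0) (t := SD) (b := SD)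
      le_rfl le_rfl le_rfl h (fun ξ _ => heps_nonneg hTM hε0 hε ξ)
    simpa using this

end Aux

set_option maxHeartbeats 1600000 in
/-- The Technical Lemma (Lemma 7.2) of the paper: for `γ > 2`, `λ > 2`, `T_M > 1` and
`0 < S_min ≤ S_max < 1` there are constants `C, D > 0`, independent of `ε`, such that
for all `ε ∈ (0,1/4]`, `S_D ∈ [S_min, S_max]` and `s ∈ ℝ`,
`E_ε(s) ≥ C (Z_ε(s)^{2−γ} + (1 − Z_ε(s))^{2−λ}) − D`. -/
theorem regularized_entropy_lower_bound
    (γ lam TM : ℝ) (hγ : 2 < γ) (hlam : 2 < lam) (hTM : 1 < TM)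
    (Smin Smax : ℝ) (h0 : 0 < Smin) (h1 : Smin ≤ Smax) (h2 : Smax < 1) :
    ∃ C > (0:ℝ), ∃ D > (0:ℝ),
      ∀ ε ∈ Set.Ioc (0:ℝ) (1/4), ∀ SD ∈ Set.Icc Smin Smax, ∀ s : ℝ,
        Eeps γ lam TM ε SD s ≥
          C * (Zeps ε s ^ (2 - γ) + (1 - Zeps ε s) ^ (2 - lam)) - D := by
  have hTM' : 0 ≤ TM := by linarith
  have hSx : 0 < 1 - Smax := by linarith
  have hK1 : (0:ℝ) < (2:ℝ) ^ (-γ) * (Smin ^ 2 / 8) :=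
    mul_pos (Real.rpow_pos_of_pos two_pos _) (by positivity)
  have hK2 : (0:ℝ) < (2:ℝ) ^ (-lam) * ((1 - Smax) ^ 2 / 8) :=
    mul_pos (Real.rpow_pos_of_pos two_pos _) (by positivity)
  set C := min ((2:ℝ) ^ (-γ) * (Smin ^ 2 / 8)) ((2:ℝ) ^ (-lam) * ((1 - Smax) ^ 2 / 8))
    with hCdef
  have hC : 0 < C := lt_min hK1 hK2
  have hCl : C ≤ (2:ℝ) ^ (-γ) * (Smin ^ 2 / 8) := min_le_left _ _
  have hCr : C ≤ (2:ℝ) ^ (-lam) * ((1 - Smax) ^ 2 / 8) := min_le_right _ _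
  have hx1 : (0:ℝ) ≤ ((1:ℝ)/4) ^ (2 - lam) := Real.rpow_nonneg (by norm_num) _
  have hx2 : (0:ℝ) ≤ ((1:ℝ)/4) ^ (2 - γ) := Real.rpow_nonneg (by norm_num) _
  have hx3 : (0:ℝ) ≤ (Smin/4) ^ (2 - γ) := Real.rpow_nonneg (by linarith) _
  have hx4 : (0:ℝ) ≤ ((1 - Smax)/4) ^ (2 - lam) := Real.rpow_nonneg (by linarith) _
  set D := C * (((1:ℝ)/4) ^ (2 - lam) + ((1:ℝ)/4) ^ (2 - γ) + (Smin/4) ^ (2 - γ)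
      + ((1 - Smax)/4) ^ (2 - lam)) + 1 with hDdef
  clear_value C D
  have hD : 0 < D := by
    have h := mul_nonneg hC.le (by linarith :
      (0:ℝ) ≤ ((1:ℝ)/4) ^ (2 - lam) + ((1:ℝ)/4) ^ (2 - γ) + (Smin/4) ^ (2 - γ)
        + ((1 - Smax)/4) ^ (2 - lam))
    linarith
  refine ⟨C, hC, D, hD, ?_⟩
  rintro ε ⟨hε0, hε4⟩ SD ⟨hSD1, hSD2⟩ s
  have h2ε : (1:ℝ)/2 ≤ 1 - 2*ε := by linarith
  rw [ge_iff_le]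
  rcases le_or_gt s (Smin/2) with hsL | hsM
  · -- LEFT CASE : s ≤ Smin/2
    have hZs : Z s = max s 0 := min_eq_left (max_le (by linarith) zero_le_one)
    set a := max s 0 with hadef
    set z := Zeps ε s with hzdef0
    have hz0 : 0 < z := Zeps_pos hε0 hε4 s
    have hsa : s ≤ a := le_max_left s 0
    have hzdef : z = (1 - 2*ε) * a + ε := by rw [hzdef0, Zeps, hZs]
    have ha0 : 0 ≤ a := le_max_right s 0
    have haS : a ≤ Smin/2 := max_le hsL (by linarith)
    clear_value a z
    have hprod : (1 - 2*ε) * a ≤ 1 * (1/2) :=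
      mul_le_mul (by linarith) (by linarith) ha0 (by norm_num)
    have hz1 : z ≤ 1 := by linarith
    set t := a + Smin/2 * z with htdef
    clear_value t
    have hat : a ≤ t := by linarith [mul_nonneg h0.le hz0.le]
    have htSD : t ≤ SD := by
      have := mul_le_mul_of_nonneg_left hz1 (by linarith : (0:ℝ) ≤ Smin/2)
      linarith
    have ht0 : 0 ≤ t := le_trans ha0 hat
    have hZt : Z t = t := by
      rw [Z, max_eq_left ht0, min_eq_left (by linarith)]
    have hZet : Zeps ε t ≤ 2 * z := by
      rw [Zeps, hZt, htdef]
      have hin : (0:ℝ) ≤ 1 - (1 - 2*ε) * (Smin/2) := by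
        have : (1 - 2*ε) * (Smin/2) ≤ 1 * (1/2) :=
          mul_le_mul (by linarith) (by linarith) (by linarith) (by norm_num)
        linarith
      linarith [mul_nonneg hz0.le hin]
    have hbound : ∀ ξ ∈ Set.Icc a t, (2*z) ^ (-γ) ≤ heps γ lam TM ε ξ := by
      intro ξ hξ
      have h1 : Zeps ε ξ ≤ 2*z := le_trans (Zeps_mono hε4 hξ.2) hZet
      have h2 : (2*z) ^ (-γ) ≤ Zeps ε ξ ^ (-γ) :=
        Real.rpow_le_rpow_of_nonpos (Zeps_pos hε0 hε4 ξ) h1 (by linarith)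
      have h3 : 0 ≤ TM * (1 - Zeps ε ξ) ^ (-lam) :=
        mul_nonneg hTM' (Real.rpow_nonneg (Zeps_lt_one hε0 hε4 ξ).le _)
      rw [heps]; linarith
    have hK0 : 0 ≤ (2*z) ^ (-γ) := Real.rpow_nonneg (by linarith) _
    have hE := bump_left hTM' hε0 hε4 hK0 hsa hat htSD hbound
    have hsplit : z ^ (2 - γ) = z ^ (-γ) * z ^ 2 := by
      rw [show (2:ℝ) - γ = -γ + 2 by ring, Real.rpow_add hz0, Real.rpow_two]
    have hEq : (2*z) ^ (-γ) * (t - a) ^ 2 / 2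
        = (2:ℝ) ^ (-γ) * (Smin ^ 2 / 8) * z ^ (2 - γ) := by
      rw [Real.mul_rpow (by norm_num) hz0.le, hsplit, htdef]
      ring
    have hA0 : 0 ≤ z ^ (2 - γ) := Real.rpow_nonneg hz0.le _
    have hCA : C * z ^ (2 - γ) ≤ (2:ℝ) ^ (-γ) * (Smin ^ 2 / 8) * z ^ (2 - γ) :=
      mul_le_mul_of_nonneg_right hCl hA0
    have hBb : (1 - z) ^ (2 - lam) ≤ ((1:ℝ)/4) ^ (2 - lam) := by
      have hle : (1:ℝ)/4 ≤ 1 - z := by linarith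
      exact Real.rpow_le_rpow_of_nonpos (by norm_num) hle (by linarith)
    have hCB : C * (1 - z) ^ (2 - lam) ≤ C * ((1:ℝ)/4) ^ (2 - lam) :=
      mul_le_mul_of_nonneg_left hBb hC.le
    have hDge : C * ((1:ℝ)/4) ^ (2 - lam) ≤ D - 1 := by
      linarith [mul_nonneg hC.le hx2, mul_nonneg hC.le hx3, mul_nonneg hC.le hx4]
    rw [hEq] at hE
    linarith
  rcases le_or_gt s ((1 + Smax)/2) with hsMid | hsR
  · -- MIDDLE CASE : Smin/2 < s ≤ (1+Smax)/2
    have hZs : Z s = s := by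
      rw [Z, max_eq_left (by linarith), min_eq_left (by linarith)]
    have hz : Zeps ε s = (1 - 2*ε) * s + ε := by rw [Zeps, hZs]
    have hA : Zeps ε s ^ (2 - γ) ≤ (Smin/4) ^ (2 - γ) := by
      have hp : (1:ℝ)/2 * (Smin/2) ≤ (1 - 2*ε) * s :=
        mul_le_mul h2ε (by linarith) (by linarith) (by linarith)
      have hle : Smin/4 ≤ Zeps ε s := by linarith [hz]
      exact Real.rpow_le_rpow_of_nonpos (by linarith) hle (by linarith)
    have hB : (1 - Zeps ε s) ^ (2 - lam) ≤ ((1 - Smax)/4) ^ (2 - lam) := by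
      have hp : (1:ℝ)/2 * ((1 - Smax)/2) ≤ (1 - 2*ε) * (1 - s) :=
        mul_le_mul h2ε (by linarith) (by linarith) (by linarith)
      have hle : (1 - Smax)/4 ≤ 1 - Zeps ε s := by linarith [hz]
      exact Real.rpow_le_rpow_of_nonpos (by linarith) hle (by linarith)
    have hE := Eeps_nonneg (γ := γ) (lam := lam) hTM' hε0 hε4 SD s
    linarith [mul_le_mul_of_nonneg_left hA hC.le, mul_le_mul_of_nonneg_left hB hC.le,
      mul_nonneg hC.le hx1, mul_nonneg hC.le hx2]
  · -- RIGHT CASE : (1+Smax)/2 < s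
    have hZs : Z s = min s 1 := by rw [Z, max_eq_left (by linarith)]
    set b := min s 1 with hbdef
    have hbs : b ≤ s := min_le_left s 1
    have hb1 : b ≤ 1 := min_le_right s 1
    have hbl : (1 + Smax)/2 ≤ b := le_min (by linarith) (by linarith)
    set w := 1 - Zeps ε s with hwdef0
    have hw0 : 0 < w := by rw [hwdef0]; exact Zeps_lt_one hε0 hε4 s
    have hwdef : w = (1 - 2*ε) * (1 - b) + ε := by
      rw [hwdef0, Zeps, hZs]; ring
    have hZs' : Zeps ε s = 1 - w := by rw [hwdef0]; ring
    clear_value b w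
    have hw1 : w ≤ 1 := by
      have := mul_le_mul_of_nonneg_left (by linarith : 1 - b ≤ 1)
        (by linarith : (0:ℝ) ≤ 1 - 2*ε)
      linarith
    have hw34 : w ≤ 3/4 := by
      have : (1 - 2*ε) * (1 - b) ≤ 1 * ((1 - Smax)/2) :=
        mul_le_mul (by linarith) (by linarith) (by linarith) (by norm_num)
      linarith
    set t := b - (1 - Smax)/2 * w with htdef
    clear_value t
    have htb : t ≤ b := by linarith [mul_nonneg (by linarith : (0:ℝ) ≤ (1 - Smax)/2) hw0.le]
    have hSmt : Smax ≤ t := by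
      have := mul_le_mul_of_nonneg_left hw1 (by linarith : (0:ℝ) ≤ (1 - Smax)/2)
      linarith
    have hSDt : SD ≤ t := le_trans hSD2 hSmt
    have ht0 : 0 ≤ t := by linarith
    have ht1 : t ≤ 1 := le_trans htb hb1
    have hZt : Z t = t := by rw [Z, max_eq_left ht0, min_eq_left ht1]
    have hZet : 1 - Zeps ε t ≤ 2 * w := by
      rw [Zeps, hZt, htdef]
      have hin : (0:ℝ) ≤ 1 - (1 - 2*ε) * ((1 - Smax)/2) := by
        have : (1 - 2*ε) * ((1 - Smax)/2) ≤ 1 * (1/2) :=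
          mul_le_mul (by linarith) (by linarith) (by linarith) (by norm_num)
        linarith
      linarith [mul_nonneg hw0.le hin]
    have hbound : ∀ ξ ∈ Set.Icc t b, (2*w) ^ (-lam) ≤ heps γ lam TM ε ξ := by
      intro ξ hξ
      have h1 : Zeps ε t ≤ Zeps ε ξ := Zeps_mono hε4 hξ.1
      have h1' : 1 - Zeps ε ξ ≤ 2*w := by linarith
      have h2 : (2*w) ^ (-lam) ≤ (1 - Zeps ε ξ) ^ (-lam) :=
        Real.rpow_le_rpow_of_nonpos (Zeps_lt_one hε0 hε4 ξ) h1' (by linarith)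
      have h3 : (1 - Zeps ε ξ) ^ (-lam) ≤ TM * (1 - Zeps ε ξ) ^ (-lam) := by
        nlinarith [Real.rpow_nonneg (Zeps_lt_one hε0 hε4 ξ).le (-lam)]
      have h4 : 0 ≤ Zeps ε ξ ^ (-γ) := Real.rpow_nonneg (Zeps_pos hε0 hε4 ξ).le _
      rw [heps]; linarith
    have hK0 : 0 ≤ (2*w) ^ (-lam) := Real.rpow_nonneg (by linarith) _
    have hE := bump_right hTM' hε0 hε4 hK0 hSDt htb (by linarith : b ≤ s) hbound
    have hsplit : w ^ (2 - lam) = w ^ (-lam) * w ^ 2 := by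
      rw [show (2:ℝ) - lam = -lam + 2 by ring, Real.rpow_add hw0, Real.rpow_two]
    have hEq : (2*w) ^ (-lam) * (b - t) ^ 2 / 2
        = (2:ℝ) ^ (-lam) * ((1 - Smax) ^ 2 / 8) * w ^ (2 - lam) := by
      rw [Real.mul_rpow (by norm_num) hw0.le, hsplit, htdef]
      ring
    have hB0 : 0 ≤ w ^ (2 - lam) := Real.rpow_nonneg hw0.le _
    have hCB : C * w ^ (2 - lam) ≤ (2:ℝ) ^ (-lam) * ((1 - Smax) ^ 2 / 8) * w ^ (2 - lam) :=
      mul_le_mul_of_nonneg_right hCr hB0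
    have hAb : Zeps ε s ^ (2 - γ) ≤ ((1:ℝ)/4) ^ (2 - γ) := by
      have hle : (1:ℝ)/4 ≤ Zeps ε s := by rw [hZs']; linarith
      exact Real.rpow_le_rpow_of_nonpos (by norm_num) hle (by linarith)
    have hCA : C * Zeps ε s ^ (2 - γ) ≤ C * ((1:ℝ)/4) ^ (2 - γ) :=
      mul_le_mul_of_nonneg_left hAb hC.le
    have hDge : C * ((1:ℝ)/4) ^ (2 - γ) ≤ D - 1 := by
      linarith [mul_nonneg hC.le hx1, mul_nonneg hC.le hx3, mul_nonneg hC.le hx4]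
    rw [hEq] at hE
    linarith
end

section
/- Let γ > 2 and fix 0 < S_min ≤ S_max < 1. There exists a positive constant D depending only on γ, S_min, S_max such that for every ε ∈ (0, 1/4], every S_D ∈ [S_min, S_max], and every s < 0: E_{1,ε}^γ(s) ≥ s²/(2ε^γ) + ε^{2-γ} / ( (1−2ε)² (γ−1)(γ−2) ) − D, where E_{1,ε}^γ(s) = s ∫_{S_D}^s Z_ε(ξ)^{-γ} dξ − ∫_{S_D}^s ξ Z_ε(ξ)^{-γ} dξ. -/
lemma aux_arith (A M0 g c t : ℝ) (hA : 0 < A) (hAM : A ≤ M0) (hg : 0 < g)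
    (ht : 0 ≤ t) (hc : 1/4 ≤ c) (hc0 : 0 < c) :
    -(4 * M0 / g) ≤ (A / (-g) + t) / c := by
  have hM0g : 0 ≤ M0 / g := div_nonneg (by linarith) hg.le
  have h1 : -(M0 / g) ≤ A / (-g) + t := by
    rw [div_neg]
    have : A / g ≤ M0 / g := by gcongr
    linarith
  have h2 : -(M0 / g) / c ≤ (A / (-g) + t) / c :=
    div_le_div_of_nonneg_right h1 hc0.le
  have h3 : -(4 * M0 / g) ≤ -(M0 / g) / c := by
    rw [neg_div, neg_le_neg_iff, div_le_iff₀ hc0, mul_div_assoc]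
    nlinarith [mul_nonneg hM0g (by linarith : (0:ℝ) ≤ c - 1/4)]
  linarith

/-- The first component of the regularized entropy with base point `S_D`:
`E_{1,ε}^γ(s) = s ∫_{S_D}^s Z_ε(ξ)^{-γ} dξ − ∫_{S_D}^s ξ Z_ε(ξ)^{-γ} dξ`. -/
noncomputable def E1 (γ ε SD s : ℝ) : ℝ :=
  s * (∫ ξ in SD..s, Zeps ε ξ ^ (-γ)) - ∫ ξ in SD..s, ξ * Zeps ε ξ ^ (-γ)

/-- The Case 2 lower bound of the Appendix of the paper: for `γ > 2` and
`0 < S_min ≤ S_max < 1` there is a constant `D > 0` depending only on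
`γ, S_min, S_max` such that for all `ε ∈ (0,1/4]`, `S_D ∈ [S_min, S_max]` and `s < 0`,
`E_{1,ε}^γ(s) ≥ s²/(2ε^γ) + ε^{2−γ}/((1−2ε)²(γ−1)(γ−2)) − D`. -/
theorem E1_lower_bound_negative_s
    (γ : ℝ) (hγ : 2 < γ)
    (Smin Smax : ℝ) (h0 : 0 < Smin) (h1 : Smin ≤ Smax) (h2 : Smax < 1) :
    ∃ D > (0:ℝ),
      ∀ ε ∈ Set.Ioc (0:ℝ) (1/4), ∀ SD ∈ Set.Icc Smin Smax, ∀ s : ℝ, s < 0 →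
        E1 γ ε SD s ≥
          s ^ 2 / (2 * ε ^ γ) +
            ε ^ (2 - γ) / ((1 - 2 * ε) ^ 2 * ((γ - 1) * (γ - 2))) - D := by
  have hγ2 : (0:ℝ) < γ - 2 := by linarith
  have hM0 : (0:ℝ) < (Smin/2) ^ (2-γ) := Real.rpow_pos_of_pos (half_pos h0) _
  have hD0 : (0:ℝ) < 4 * (Smin/2) ^ (2-γ) / (γ - 2) := div_pos (by linarith) hγ2
  refine ⟨4 * (Smin/2) ^ (2-γ) / (γ - 2), hD0, ?_⟩
  rintro ε ⟨hε, hε4⟩ SD ⟨hSD1, hSD2⟩ s hs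
  have hε2 : (1:ℝ)/2 ≤ 1 - 2*ε := by linarith
  have hε2' : (0:ℝ) < 1 - 2*ε := by linarith
  have hSD0 : 0 < SD := lt_of_lt_of_le h0 hSD1
  have hSD1' : SD < 1 := lt_of_le_of_lt hSD2 h2
  have hZ0 : ∀ x : ℝ, 0 ≤ Z x := fun x => le_min (le_max_right x 0) zero_le_one
  have hZpos : ∀ x : ℝ, 0 < Zeps ε x := by
    intro x
    have h := hZ0 x
    have : 0 ≤ (1 - 2*ε) * Z x := mul_nonneg hε2'.le h
    unfold Zeps; linarith
  have hZc : Continuous (Zeps ε) := by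
    unfold Zeps Z
    exact (continuous_const.mul ((continuous_id.max continuous_const).min continuous_const)).add continuous_const
  have hfc : Continuous fun x => Zeps ε x ^ (-γ) :=
    hZc.rpow_const (fun x => Or.inl (hZpos x).ne')
  have hgc : Continuous fun x => (x - s) * Zeps ε x ^ (-γ) :=
    (continuous_id.sub continuous_const).mul hfc
  have hgint : ∀ a b : ℝ, IntervalIntegrable (fun x => (x - s) * Zeps ε x ^ (-γ)) MeasureTheory.volume a b :=
    fun a b => hgc.intervalIntegrable a b
  -- E1 as a single integral
  have hE1 : E1 γ ε SD s = ∫ x in s..SD, (x - s) * Zeps ε x ^ (-γ) := by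
    unfold E1
    have hA : IntervalIntegrable (fun x => s * Zeps ε x ^ (-γ)) MeasureTheory.volume SD s :=
      (continuous_const.mul hfc).intervalIntegrable _ _
    have hB : IntervalIntegrable (fun x : ℝ => x * Zeps ε x ^ (-γ)) MeasureTheory.volume SD s :=
      (continuous_id'.mul hfc).intervalIntegrable _ _
    rw [← intervalIntegral.integral_const_mul, ← intervalIntegral.integral_sub hA hB,
        intervalIntegral.integral_symm SD s, ← intervalIntegral.integral_neg]
    apply intervalIntegral.integral_congr
    intro x _
    ring
  -- split at 0
  have hsplit : (∫ x in s..SD, (x - s) * Zeps ε x ^ (-γ))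
      = (∫ x in s..(0:ℝ), (x - s) * Zeps ε x ^ (-γ))
        + ∫ x in (0:ℝ)..SD, (x - s) * Zeps ε x ^ (-γ) := by
    rw [intervalIntegral.integral_add_adjacent_intervals (hgint s 0) (hgint 0 SD)]
  -- piece 1
  have hp1 : (∫ x in s..(0:ℝ), (x - s) * Zeps ε x ^ (-γ)) = s^2 / (2 * ε ^ γ) := by
    have hcongr : ∀ x ∈ Set.uIcc s (0:ℝ), (x - s) * Zeps ε x ^ (-γ) = (x - s) * ε ^ (-γ) := by
      intro x hx
      rw [Set.uIcc_of_le hs.le] at hx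
      have hx0 : x ≤ 0 := hx.2
      have hz : Zeps ε x = ε := by
        unfold Zeps Z
        rw [max_eq_right hx0, min_eq_left zero_le_one]
        ring
      rw [hz]
    rw [intervalIntegral.integral_congr hcongr, intervalIntegral.integral_mul_const,
        intervalIntegral.integral_sub intervalIntegral.intervalIntegrable_id
          (intervalIntegrable_const (c := s)),
        integral_id, intervalIntegral.integral_const,
        Real.rpow_neg hε.le, smul_eq_mul]
    have hne : ε ^ γ ≠ 0 := (Real.rpow_pos_of_pos hε γ).ne'
    field_simp
    ring
  -- piece 2: exact value of ∫ x * Zeps^{-γ}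
  set u : ℝ → ℝ := fun x => (1 - 2*ε) * x + ε with hu_def
  have hupos : ∀ x : ℝ, 0 ≤ x → 0 < u x := by
    intro x hx
    have : 0 ≤ (1-2*ε)*x := mul_nonneg hε2'.le hx
    simp only [hu_def]; linarith
  set F : ℝ → ℝ := fun x => (u x ^ (2-γ) / (2-γ) - ε * u x ^ (1-γ) / (1-γ)) / (1-2*ε)^2 with hF_def
  have e1 : (2:ℝ) - γ ≠ 0 := by linarith
  have e2 : (1:ℝ) - γ ≠ 0 := by linarith
  have e3 : ((1:ℝ) - 2*ε) ≠ 0 := hε2'.ne'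
  have hderiv : ∀ x ∈ Set.uIcc (0:ℝ) SD, HasDerivAt F (x * u x ^ (-γ)) x := by
    intro x hx
    rw [Set.uIcc_of_le hSD0.le] at hx
    have hux : 0 < u x := hupos x hx.1
    have hu' : HasDerivAt u (1 - 2*ε) x := by
      have h := ((hasDerivAt_id' x).const_mul (1-2*ε)).add_const ε
      rw [mul_one] at h
      exact h
    have h1 := hu'.rpow_const (p := 2-γ) (Or.inl hux.ne')
    have h2 := hu'.rpow_const (p := 1-γ) (Or.inl hux.ne')
    have h3 := ((h1.div_const (2-γ)).sub ((h2.const_mul ε).div_const (1-γ))).div_const ((1-2*ε)^2)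
    refine h3.congr_deriv (Eq.symm ?_)
    have hsp : u x ^ ((1:ℝ)-γ) = u x * u x ^ (-γ) := by
      rw [show (1:ℝ)-γ = 1 + -γ by ring, Real.rpow_add hux, Real.rpow_one]
    rw [show (2:ℝ)-γ-1 = 1-γ by ring, show (1:ℝ)-γ-1 = -γ by ring, hsp]
    field_simp
    ring
  have hufc : ContinuousOn (fun x => x * u x ^ (-γ)) (Set.uIcc (0:ℝ) SD) := by
    apply ContinuousOn.mul continuousOn_id
    apply ContinuousOn.rpow_const
    · exact ((continuous_const.mul continuous_id).add continuous_const).continuousOn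
    · intro x hx
      rw [Set.uIcc_of_le hSD0.le] at hx
      exact Or.inl (hupos x hx.1).ne'
  have hJ : (∫ x in (0:ℝ)..SD, x * u x ^ (-γ)) = F SD - F 0 :=
    intervalIntegral.integral_eq_sub_of_hasDerivAt hderiv hufc.intervalIntegrable
  have hJcongr : (∫ x in (0:ℝ)..SD, x * Zeps ε x ^ (-γ)) = ∫ x in (0:ℝ)..SD, x * u x ^ (-γ) := by
    apply intervalIntegral.integral_congr
    intro x hx
    rw [Set.uIcc_of_le hSD0.le] at hx
    have hx0 : 0 ≤ x := hx.1
    have hx1 : x ≤ 1 := le_trans hx.2 hSD1'.le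
    show x * Zeps ε x ^ (-γ) = x * u x ^ (-γ)
    have hz : Zeps ε x = u x := by
      unfold Zeps Z
      rw [max_eq_left hx0, min_eq_left hx1]
    rw [hz]
  -- monotonicity: ∫ x*f ≤ ∫ (x-s)*f on [0,SD]
  have hmono : (∫ x in (0:ℝ)..SD, x * Zeps ε x ^ (-γ))
      ≤ ∫ x in (0:ℝ)..SD, (x - s) * Zeps ε x ^ (-γ) := by
    apply intervalIntegral.integral_mono_on hSD0.le
      ((continuous_id'.mul hfc).intervalIntegrable _ _) (hgint 0 SD)
    intro x _
    have : 0 ≤ Zeps ε x ^ (-γ) := Real.rpow_nonneg (hZpos x).le _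
    show x * Zeps ε x ^ (-γ) ≤ (x - s) * Zeps ε x ^ (-γ)
    nlinarith
  -- value of F 0
  have hu0 : u 0 = ε := by simp [hu_def]
  have hF0 : -F 0 = ε ^ (2-γ) / ((1 - 2*ε) ^ 2 * ((γ - 1) * (γ - 2))) := by
    rw [hF_def]
    simp only [hu0]
    have hsp : ε ^ ((2:ℝ)-γ) = ε * ε ^ ((1:ℝ)-γ) := by
      rw [show (2:ℝ)-γ = 1 + (1-γ) by ring, Real.rpow_add hε, Real.rpow_one]
    rw [hsp]
    have hγ1 : (γ:ℝ) - 1 ≠ 0 := by linarith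
    have hγ2' : (γ:ℝ) - 2 ≠ 0 := hγ2.ne'
    field_simp
    ring
  -- lower bound on F SD
  have huD : Smin/2 ≤ u SD := by
    have h : Smin/2 ≤ (1-2*ε) * SD := by
      calc Smin/2 = (1/2) * Smin := by ring
      _ ≤ (1-2*ε) * SD := mul_le_mul hε2 hSD1 h0.le hε2'.le
    simp only [hu_def]; linarith
  have huDpos : 0 < u SD := lt_of_lt_of_le (half_pos h0) huD
  have hA : u SD ^ (2-γ) ≤ (Smin/2) ^ (2-γ) :=
    Real.rpow_le_rpow_of_nonpos (half_pos h0) huD (by linarith)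
  have hFSD : F SD ≥ -(4 * (Smin/2) ^ (2-γ) / (γ-2)) := by
    have hApos : 0 < u SD ^ (2-γ) := Real.rpow_pos_of_pos huDpos _
    have hBnn : 0 ≤ u SD ^ (1-γ) := (Real.rpow_pos_of_pos huDpos _).le
    have hsq : (1/4:ℝ) ≤ (1-2*ε)^2 := by nlinarith
    have hsqpos : (0:ℝ) < (1-2*ε)^2 := by positivity
    have ht : 0 ≤ -(ε * u SD ^ (1-γ) / (1-γ)) := by
      rw [neg_nonneg]
      exact div_nonpos_of_nonneg_of_nonpos (mul_nonneg hε.le hBnn) (by linarith)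
    have key := aux_arith (u SD ^ (2-γ)) ((Smin/2) ^ (2-γ)) (γ-2) ((1-2*ε)^2)
      (-(ε * u SD ^ (1-γ) / (1-γ))) hApos hA hγ2 ht hsq hsqpos
    rw [ge_iff_le, hF_def]
    rw [show ((2:ℝ)-γ) = -(γ-2) by ring] at key ⊢
    calc -(4 * (Smin/2) ^ (-(γ-2)) / (γ-2))
        ≤ (u SD ^ (-(γ-2)) / (-(γ-2)) + -(ε * u SD ^ (1-γ) / (1-γ))) / (1-2*ε)^2 := key
      _ = (u SD ^ (-(γ-2)) / (-(γ-2)) - ε * u SD ^ (1-γ) / (1-γ)) / (1-2*ε)^2 := by ring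
  -- assemble
  rw [ge_iff_le, hE1, hsplit, hp1]
  have : F SD - F 0 ≤ ∫ x in (0:ℝ)..SD, (x - s) * Zeps ε x ^ (-γ) := by
    rw [← hJ, ← hJcongr]; exact hmono
  linarith
end
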